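/- For any l ≥ 0, if binomial(D+l-1, l) < p ≤ binomial(D+l, l+1) and 0 ≤ d < p(l+1) - binomial(D+l, l), then Θ^p_d = 0; i.e., there exist no p pairwise distinct multi-indices S_1, ..., S_p in ℤ_{≥0}^{D-1} with |S_1| + ... + |S_p| = d. -/

import Mathlib

open Finset

/-- Summing the indicator of `c ≤ m` over `range n` gives `n - c`. -/
lemma sum_indicator_le (n c : ℕ) :
    (∑ m ∈ Finset.range n, if c ≤ m then 1 else 0) = n - c := by
  induction n with
  | zero => simp
  | succ n ih => rw [Finset.sum_range_succ, ih]; split <;> omega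

/-- Stars and bars bound: a finset of `k`-tuples each of total sum at most `m`
has cardinality at most `(k + m).choose m`. -/
lemma tuple_count_le {k m : ℕ} (B : Finset (Fin k → ℕ))
    (hB : ∀ S ∈ B, ∑ i, S i ≤ m) : B.card ≤ (k + m).choose m := by
  classical
  set f : (Fin k → ℕ) → Multiset (Fin (k + 1)) :=
    fun S => ∑ i : Fin (k + 1),
      Multiset.replicate ((Fin.snoc S (m - ∑ j, S j) : Fin (k + 1) → ℕ) i) i with hf
  have hcount : ∀ (S : Fin k → ℕ) (a : Fin (k + 1)),
      Multiset.count a (f S) = (Fin.snoc S (m - ∑ j, S j) : Fin (k + 1) → ℕ) a := by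
    intro S a
    simp [hf, Multiset.count_sum', Multiset.count_replicate]
  have hcardf : ∀ S ∈ B, Multiset.card (f S) = m := by
    intro S hS
    rw [hf]
    rw [Multiset.card_sum]
    simp only [Multiset.card_replicate]
    rw [Fin.sum_univ_castSucc]
    simp only [Fin.snoc_castSucc, Fin.snoc_last]
    have := hB S hS
    omega
  have hinj : Set.InjOn f B := by
    intro S hS S' hS' h
    funext i
    have := congrArg (Multiset.count (Fin.castSucc i)) h
    rwa [hcount, hcount, Fin.snoc_castSucc, Fin.snoc_castSucc] at this
  have hmaps : ∀ S ∈ B, f S ∈ (Finset.univ : Finset (Sym (Fin (k + 1)) m)).image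
      Sym.toMultiset := by
    intro S hS
    exact Finset.mem_image.2 ⟨⟨f S, hcardf S hS⟩, Finset.mem_univ _, rfl⟩
  have hle := Finset.card_le_card_of_injOn f hmaps hinj
  have himg : ((Finset.univ : Finset (Sym (Fin (k + 1)) m)).image Sym.toMultiset).card
      = Fintype.card (Sym (Fin (k + 1)) m) := by
    rw [Finset.card_image_of_injective _ (fun a b hab => Sym.coe_injective hab),
      Finset.card_univ]
  rw [himg, Sym.card_sym_eq_choose] at hle
  simpa using hle

/-- for any `l ≥ 0`, if `C(D+l-1, l) < p ≤ C(D+l, l+1)` and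
`d < p(l+1) - C(D+l, l)`, then there exist no `p` pairwise distinct multi-indices
`S_1, …, S_p ∈ ℤ_{≥0}^{D-1}` with `|S_1| + ⋯ + |S_p| = d`; i.e. `Θ^p_d = 0`. -/
theorem stmt4 (D l p d : ℕ) (hD : 2 ≤ D)
    (h1 : Nat.choose (D + l - 1) l < p) (h2 : p ≤ Nat.choose (D + l) (l + 1))
    (h3 : d < p * (l + 1) - Nat.choose (D + l) l) :
    {A : Finset (Fin (D - 1) → ℕ) | A.card = p ∧ (∑ S ∈ A, ∑ i, S i) = d} = ∅ := by
  classical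
  ext A
  simp only [Set.mem_setOf_eq, Set.mem_empty_iff_false, iff_false, not_and]
  intro hcard hsum
  have hmain : ∑ S ∈ A, ((l + 1) - ∑ i, S i) ≤ (D + l).choose l := by
    calc ∑ S ∈ A, ((l + 1) - ∑ i, S i)
        = ∑ S ∈ A, ∑ m ∈ Finset.range (l + 1), (if ∑ i, S i ≤ m then 1 else 0) :=
          Finset.sum_congr rfl fun S _ => (sum_indicator_le (l + 1) (∑ i, S i)).symm
      _ = ∑ m ∈ Finset.range (l + 1), ∑ S ∈ A, (if ∑ i, S i ≤ m then 1 else 0) :=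
          Finset.sum_comm
      _ ≤ ∑ m ∈ Finset.range (l + 1), (D - 1 + m).choose m := by
          refine Finset.sum_le_sum fun m _ => ?_
          calc (∑ S ∈ A, if ∑ i, S i ≤ m then 1 else 0)
              = (A.filter (fun S => ∑ i, S i ≤ m)).card :=
                (Finset.card_filter _ _).symm
            _ ≤ (D - 1 + m).choose m :=
                tuple_count_le _ (fun S hS => (Finset.mem_filter.1 hS).2)
      _ = ∑ m ∈ Finset.range (l + 1), (D - 1 + m).choose (D - 1) :=
          Finset.sum_congr rfl fun m _ => Nat.choose_symm_of_eq_add (by clear hsum; omega)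
      _ = ∑ j ∈ Finset.Ico (D - 1) (D - 1 + l + 1), j.choose (D - 1) := by
          rw [Finset.sum_Ico_eq_sum_range]
          have e : D - 1 + l + 1 - (D - 1) = l + 1 := by clear hsum; omega
          rw [e]
      _ = (D + l).choose l := by
          rw [Finset.Ico_add_one_right_eq_Icc, Nat.sum_Icc_choose,
            show D - 1 + l + 1 = D + l from by clear hsum; omega,
            show D - 1 + 1 = D from by clear hsum; omega]
          exact Nat.choose_symm_of_eq_add rfl
  have key : p * (l + 1) ≤ d + (D + l).choose l := by
    calc p * (l + 1) = ∑ _S ∈ A, (l + 1) := by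
          rw [Finset.sum_const, hcard, smul_eq_mul]
      _ ≤ ∑ S ∈ A, ((∑ i, S i) + ((l + 1) - ∑ i, S i)) :=
          Finset.sum_le_sum fun S _ => by clear hsum hmain; omega
      _ = d + ∑ S ∈ A, ((l + 1) - ∑ i, S i) := by
          rw [Finset.sum_add_distrib, hsum]
      _ ≤ d + (D + l).choose l := Nat.add_le_add_left hmain d
  clear hsum hmain
  omega
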